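/- Let K < 0 be a real number, n, m ∈ ℕ, let y₁, …, y_m ∈ ℝ^{n+1} all lie on the Lorentz hyperboloid L^n_K, and let a₁, …, a_m ≥ 0 be nonnegative reals with at least one a_i > 0. Then the weighted sum s := Σ_{i=1}^m a_i y_i satisfies ⟨s,s⟩_L ≤ (1/K)·(Σ_{i=1}^m a_i)² < 0 and s₀ > 0. In particular, s is a timelike vector in the upper cone, so the normalization s/(√(−K)·√(−⟨s,s⟩_L)) lies on L^n_K. -/

import Mathlib

/-- The Lorentzian scalar product on `ℝ^{n+1}`:
`⟨x,y⟩_L = -x₀y₀ + ∑_{i=1}^n x_i y_i`. -/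
def lprod {n : ℕ} (x y : Fin (n + 1) → ℝ) : ℝ :=
  -(x 0 * y 0) + ∑ i : Fin n, x i.succ * y i.succ

lemma lprod_sum_left {n m : ℕ} (f : Fin m → Fin (n+1) → ℝ) (z : Fin (n+1) → ℝ) :
    lprod (∑ i, f i) z = ∑ i, lprod (f i) z := by
  simp only [lprod, Finset.sum_apply, Finset.sum_mul, Finset.sum_add_distrib,
    Finset.sum_neg_distrib]
  rw [Finset.sum_comm]

lemma lprod_comm {n : ℕ} (x z : Fin (n+1) → ℝ) : lprod x z = lprod z x := by
  simp only [lprod, mul_comm]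

lemma lprod_smul_left {n : ℕ} (c : ℝ) (x z : Fin (n+1) → ℝ) :
    lprod (c • x) z = c * lprod x z := by
  simp only [lprod, Pi.smul_apply, smul_eq_mul, Finset.mul_sum, mul_add, mul_neg]
  ring_nf

lemma lprod_div {n : ℕ} (x : Fin (n+1) → ℝ) (d : ℝ) :
    lprod (fun j => x j / d) (fun j => x j / d) = lprod x x / d ^ 2 := by
  simp only [lprod, div_mul_div_comm]
  rw [← neg_div, ← Finset.sum_div, ← add_div, sq]

lemma lprod_le_of_mem {K : ℝ} (hK : K < 0) {n : ℕ} (x z : Fin (n+1) → ℝ)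
    (hx : lprod x x = 1 / K) (hz : lprod z z = 1 / K)
    (hx0 : 0 < x 0) (hz0 : 0 < z 0) : lprod x z ≤ 1 / K := by
  unfold lprod at *
  set P := ∑ i : Fin n, x i.succ * z i.succ with hP
  have hCS : P ^ 2 ≤ (∑ i : Fin n, x i.succ ^ 2) * ∑ i : Fin n, z i.succ ^ 2 := by
    exact Finset.sum_mul_sq_le_sq_mul_sq _ _ _
  set Q := ∑ i : Fin n, x i.succ ^ 2 with hQ
  set R := ∑ i : Fin n, z i.succ ^ 2 with hR
  have hQ0 : 0 ≤ Q := Finset.sum_nonneg fun i _ => sq_nonneg _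
  have hR0 : 0 ≤ R := Finset.sum_nonneg fun i _ => sq_nonneg _
  have h2P : 2 * P ≤ Q + R := by
    have := Finset.sum_nonneg (s := Finset.univ)
      (f := fun i : Fin n => (x i.succ - z i.succ) ^ 2) fun i _ => sq_nonneg _
    simp only [sub_sq, Finset.sum_add_distrib, Finset.sum_sub_distrib] at this
    simp only [mul_assoc] at this
    simp only [hP, hQ, hR, Finset.mul_sum]
    linarith [this]
  have hx' : x 0 ^ 2 = Q - 1 / K := by
    have : ∑ i : Fin n, x i.succ * x i.succ = Q := by
      rw [hQ]; exact Finset.sum_congr rfl fun i _ => (sq (x i.succ)).symm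
    nlinarith [hx]
  have hz' : z 0 ^ 2 = R - 1 / K := by
    have : ∑ i : Fin n, z i.succ * z i.succ = R := by
      rw [hR]; exact Finset.sum_congr rfl fun i _ => (sq (z i.succ)).symm
    nlinarith [hz]
  have hc : (0:ℝ) < -(1/K) := by have := one_div_neg.mpr hK; linarith
  have key : (x 0 * z 0) ^ 2 ≥ (P - 1/K) ^ 2 := by
    have h1 : (x 0 * z 0) ^ 2 = (Q - 1/K) * (R - 1/K) := by rw [mul_pow, hx', hz']
    nlinarith [hCS, mul_nonneg hc.le (by linarith : (0:ℝ) ≤ Q + R - 2*P)]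
  have hpos : 0 < x 0 * z 0 := mul_pos hx0 hz0
  nlinarith [key, hpos, sq_nonneg (x 0 * z 0 + (P - 1/K))]

/-- For `K < 0`, points `y₁, …, y_m ∈ L^n_K` and nonnegative weights
`a₁, …, a_m` with at least one positive, the weighted sum `s = ∑ aᵢ yᵢ`
satisfies `⟨s,s⟩_L ≤ (1/K)(∑ aᵢ)² < 0` and `s₀ > 0`; in particular `s` is
timelike in the upper cone and its normalization
`s/(√(−K)·√(−⟨s,s⟩_L))` lies on `L^n_K`. -/
theorem weighted_sum_timelike_and_aggregation_on_hyperboloid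
    (K : ℝ) (hK : K < 0) (n m : ℕ)
    (y : Fin m → Fin (n + 1) → ℝ)
    (hy : ∀ i, lprod (y i) (y i) = 1 / K) (hy0 : ∀ i, y i 0 > 0)
    (a : Fin m → ℝ) (ha : ∀ i, 0 ≤ a i) (ha' : ∃ i, 0 < a i)
    (s : Fin (n + 1) → ℝ) (hs : s = ∑ i, a i • y i) :
    lprod s s ≤ (1 / K) * (∑ i, a i) ^ 2 ∧
    (1 / K) * (∑ i, a i) ^ 2 < 0 ∧
    s 0 > 0 ∧
    lprod (fun j => s j / (Real.sqrt (-K) * Real.sqrt (-(lprod s s))))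
        (fun j => s j / (Real.sqrt (-K) * Real.sqrt (-(lprod s s)))) = 1 / K ∧
    (fun j => s j / (Real.sqrt (-K) * Real.sqrt (-(lprod s s)))) 0 > 0 := by
  obtain ⟨i₀, hi₀⟩ := ha'
  have hKinv : (1:ℝ)/K < 0 := one_div_neg.mpr hK
  have hsuma : 0 < ∑ i, a i :=
    Finset.sum_pos' (fun i _ => ha i) ⟨i₀, Finset.mem_univ _, hi₀⟩
  -- expansion of lprod s s
  have hexp : lprod s s = ∑ j, ∑ k, a j * (a k * lprod (y k) (y j)) := by
    rw [hs, lprod_sum_left]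
    refine Finset.sum_congr rfl fun j _ => ?_
    rw [lprod_smul_left, lprod_comm, lprod_sum_left]
    rw [Finset.mul_sum]
    exact Finset.sum_congr rfl fun k _ => by rw [lprod_smul_left]
  -- first inequality
  have h1 : lprod s s ≤ (1 / K) * (∑ i, a i) ^ 2 := by
    rw [hexp]
    have hb : ∀ j, ∑ k, a j * (a k * lprod (y k) (y j)) ≤ ∑ k, a j * (a k * (1/K)) := by
      intro j
      refine Finset.sum_le_sum fun k _ => ?_
      refine mul_le_mul_of_nonneg_left (mul_le_mul_of_nonneg_left ?_ (ha k)) (ha j)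
      exact lprod_le_of_mem hK _ _ (hy k) (hy j) (hy0 k) (hy0 j)
    calc ∑ j, ∑ k, a j * (a k * lprod (y k) (y j))
        ≤ ∑ j, ∑ k, a j * (a k * (1/K)) := Finset.sum_le_sum fun j _ => hb j
      _ = (1 / K) * (∑ i, a i) ^ 2 := by
          rw [sq, Finset.sum_mul_sum]
          simp only [Finset.mul_sum]
          refine Finset.sum_congr rfl fun j _ => Finset.sum_congr rfl fun k _ => by ring
  have h2 : (1 / K) * (∑ i, a i) ^ 2 < 0 :=
    mul_neg_of_neg_of_pos hKinv (by positivity)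
  have hL : lprod s s < 0 := lt_of_le_of_lt h1 h2
  have h3 : s 0 > 0 := by
    rw [hs]
    simp only [Finset.sum_apply, Pi.smul_apply, smul_eq_mul]
    exact Finset.sum_pos' (fun i _ => mul_nonneg (ha i) (hy0 i).le)
      ⟨i₀, Finset.mem_univ _, mul_pos hi₀ (hy0 i₀)⟩
  have hKpos : (0:ℝ) < -K := neg_pos.mpr hK
  have hLpos : (0:ℝ) < -(lprod s s) := neg_pos.mpr hL
  have hd2 : (Real.sqrt (-K) * Real.sqrt (-(lprod s s))) ^ 2 = (-K) * (-(lprod s s)) := by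
    rw [mul_pow, Real.sq_sqrt hKpos.le, Real.sq_sqrt hLpos.le]
  have h4 : lprod (fun j => s j / (Real.sqrt (-K) * Real.sqrt (-(lprod s s))))
      (fun j => s j / (Real.sqrt (-K) * Real.sqrt (-(lprod s s)))) = 1 / K := by
    rw [lprod_div, hd2]
    rw [neg_mul_neg, div_eq_div_iff (ne_of_gt (mul_pos_of_neg_of_neg hK hL)) hK.ne]
    ring
  have hdpos : 0 < Real.sqrt (-K) * Real.sqrt (-(lprod s s)) :=
    mul_pos (Real.sqrt_pos.mpr hKpos) (Real.sqrt_pos.mpr hLpos)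
  exact ⟨h1, h2, h3, h4, div_pos h3 hdpos⟩
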